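/- Let W be a free abelian group of rank d+1 and let p be a prime, n ≥ 1. Then every element of (⋀^d W)/p^n W is a 'pure tensor', i.e., of the form (a/p^n) ⊗ u₁∧…∧u_d for some a ∈ ℤ and u₁,…,u_d ∈ W. More precisely, the sum of two such pure tensors in ⋀^d W ⊗ ℚ_p/ℤ_p is again a pure tensor. -/

import Mathlib

open TensorProduct

set_option synthInstance.maxHeartbeats 1000000
set_option maxHeartbeats 1000000

/-- The subgroup `ℤ_p ⊆ ℚ_p`, as a `ℤ`-submodule. -/
noncomputable def ZpInQp (p : ℕ) [Fact p.Prime] : Submodule ℤ ℚ_[p] :=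
  Submodule.span ℤ (Set.range ((↑) : ℤ_[p] → ℚ_[p]))

/-- The group `ℚ_p/ℤ_p`, as a `ℤ`-module. -/
noncomputable abbrev QpZp (p : ℕ) [Fact p.Prime] : Type := ℚ_[p] ⧸ ZpInQp p

noncomputable def unitBall (p : ℕ) [Fact p.Prime] : Submodule ℤ ℚ_[p] where
  carrier := {x : ℚ_[p] | ‖x‖ ≤ 1}
  add_mem' := fun {a b} ha hb => le_trans (Padic.nonarchimedean a b) (max_le ha hb)
  zero_mem' := by simp
  smul_mem' := by
    intro z x hx
    simp only [Set.mem_setOf_eq] at hx ⊢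
    rw [zsmul_eq_mul]
    calc ‖(z : ℚ_[p]) * x‖ = ‖(z : ℚ_[p])‖ * ‖x‖ := by simp
    _ ≤ 1 * 1 := mul_le_mul (Padic.norm_int_le_one z) hx (norm_nonneg x) zero_le_one
    _ = 1 := by ring

lemma mem_ZpInQp {p : ℕ} [Fact p.Prime] {x : ℚ_[p]} : x ∈ ZpInQp p ↔ ‖x‖ ≤ 1 := by
  have : ZpInQp p = unitBall p := by
    apply le_antisymm
    · rw [ZpInQp, Submodule.span_le]
      rintro _ ⟨y, rfl⟩
      exact y.2
    · intro x hx
      exact Submodule.subset_span ⟨⟨x, hx⟩, rfl⟩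
  rw [this]; rfl

lemma exists_common_gen (p : ℕ) [Fact p.Prime] (c c' : QpZp p) :
    ∃ (c₀ : QpZp p) (a b : ℤ), c = a • c₀ ∧ c' = b • c₀ := by
  obtain ⟨q, rfl⟩ := Submodule.Quotient.mk_surjective _ c
  obtain ⟨q', rfl⟩ := Submodule.Quotient.mk_surjective _ c'
  have hp1 : (1:ℝ) < (p:ℝ) := by exact_mod_cast (Fact.out : p.Prime).one_lt
  have hp0 : (p:ℚ_[p]) ≠ 0 := by exact_mod_cast (Fact.out : p.Prime).ne_zero
  -- find common n
  have key : ∀ q : ℚ_[p], ∃ n : ℕ, ∀ m : ℕ, n ≤ m → ‖(p:ℚ_[p])^m * q‖ ≤ 1 := by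
    intro q
    obtain ⟨n, hn⟩ := pow_unbounded_of_one_lt ‖q‖ hp1
    refine ⟨n, fun m hm => ?_⟩
    have : ‖(p:ℚ_[p])^m * q‖ = ((p:ℝ))⁻¹^m * ‖q‖ := by
      rw [norm_mul, norm_pow, Padic.norm_p, inv_pow]
    rw [this, inv_pow]
    rw [inv_mul_le_iff₀ (by positivity), mul_one]
    calc ‖q‖ ≤ (p:ℝ)^n := le_of_lt hn
    _ ≤ (p:ℝ)^m := pow_le_pow_right₀ (le_of_lt hp1) hm
  obtain ⟨n₁, h₁⟩ := key q
  obtain ⟨n₂, h₂⟩ := key q'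
  set n := max n₁ n₂
  have hq : ‖(p:ℚ_[p])^n * q‖ ≤ 1 := h₁ n (le_max_left _ _)
  have hq' : ‖(p:ℚ_[p])^n * q'‖ ≤ 1 := h₂ n (le_max_right _ _)
  set π : ℚ_[p] := ((p:ℚ_[p])^n)⁻¹ with hπ
  refine ⟨Submodule.Quotient.mk π, ?_⟩
  have main : ∀ r : ℚ_[p], ‖(p:ℚ_[p])^n * r‖ ≤ 1 →
      ∃ a : ℤ, (Submodule.Quotient.mk r : QpZp p) = a • Submodule.Quotient.mk π := by
    intro r hr
    set x : ℤ_[p] := ⟨(p:ℚ_[p])^n * r, hr⟩ with hx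
    refine ⟨(PadicInt.appr x n : ℤ), ?_⟩
    have hspec := PadicInt.appr_spec n x
    rw [Ideal.mem_span_singleton] at hspec
    obtain ⟨y, hy⟩ := hspec
    rw [← Submodule.Quotient.mk_smul, Submodule.Quotient.eq]
    rw [mem_ZpInQp]
    have hcalc : r - (PadicInt.appr x n : ℤ) • π = (y : ℚ_[p]) := by
      rw [zsmul_eq_mul]
      have hy' : ((x : ℚ_[p]) - (PadicInt.appr x n : ℚ_[p])) = (p:ℚ_[p])^n * y := by
        exact_mod_cast congrArg (PadicInt.Coe.ringHom (p := p)) hy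
      have hxq : (x : ℚ_[p]) = (p:ℚ_[p])^n * r := rfl
      have hinv : (p:ℚ_[p])^n * ((p:ℚ_[p])^n)⁻¹ = 1 := mul_inv_cancel₀ (pow_ne_zero _ hp0)
      rw [hπ]
      push_cast at hy' ⊢
      linear_combination ((p:ℚ_[p])^n)⁻¹ * (hy' - hxq) + ((y:ℚ_[p]) - r) * hinv
    rw [hcalc]
    exact y.2
  obtain ⟨a, ha⟩ := main q hq
  obtain ⟨b, hb⟩ := main q' hq'
  exact ⟨a, b, ha, hb⟩

section Alt
variable {R M N : Type*} [CommRing R] [AddCommGroup M] [Module R M] [AddCommGroup N]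
  [Module R N] {k : ℕ}

lemma alt_exists_smul (f : M [⋀^Fin k]→ₗ[R] N) (b u : Fin k → M)
    (h : ∀ i, u i ∈ Submodule.span R (Set.range b)) : ∃ m : R, f u = m • f b := by
  classical
  choose C hC using fun i => (Submodule.mem_span_range_iff_exists_fun R).mp (h i)
  have h1 : f u = ∑ r : Fin k → Fin k, f (fun i => C i (r i) • b (r i)) := by
    conv_lhs => rw [← funext hC]
    exact f.toMultilinearMap.map_sum (g := fun i j => C i j • b j)
  have h2 : f u ∈ Submodule.span R {f b} := by
    rw [h1]
    apply Submodule.sum_mem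
    intro r _
    have h3 := f.toMultilinearMap.map_smul_univ (fun i => C i (r i)) (fun i => b (r i))
    rw [show (f fun i => C i (r i) • b (r i)) = ((∏ i, C i (r i)) • f fun i => b (r i)) from h3]
    apply Submodule.smul_mem
    by_cases hr : Function.Injective r
    · have hbij : Function.Bijective r := Finite.injective_iff_bijective.mp hr
      set σ : Equiv.Perm (Fin k) := Equiv.ofBijective r hbij with hσ
      have h4 : (f fun i => b (r i)) = Equiv.Perm.sign σ • f b := f.map_perm b σ
      rw [h4, Units.smul_def]
      exact zsmul_mem (Submodule.mem_span_singleton_self _) _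
    · rw [Function.not_injective_iff] at hr
      obtain ⟨i, j, hij, hne⟩ := hr
      have h5 : (f fun i => b (r i)) = 0 :=
        f.map_eq_zero_of_eq (fun i => b (r i)) (show b (r i) = b (r j) by rw [hij]) hne
      rw [h5]
      exact Submodule.zero_mem _
  obtain ⟨m, hm⟩ := Submodule.mem_span_singleton.mp h2
  exact ⟨m, hm.symm⟩

lemma alt_smul_eq (f : M [⋀^Fin (k+1)]→ₗ[R] N) (u : Fin (k+1) → M) (z : R) :
    z • f u = f (Function.update u 0 (z • u 0)) := by
  rw [f.map_update_smul, Function.update_eq_self]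

lemma alt_snoc_smul (f : M [⋀^Fin (k+1)]→ₗ[R] N) (c : Fin k → M) (y : M) (z : R) :
    z • f (Fin.snoc c y) = f (Fin.snoc c (z • y)) := by
  have h1 : (Fin.snoc c (z • y) : Fin (k+1) → M)
      = Function.update (Fin.snoc c y) (Fin.last k) (z • y) := by
    rw [Fin.update_snoc_last]
  have h2 : (Fin.snoc c y : Fin (k+1) → M)
      = Function.update (Fin.snoc c y) (Fin.last k) y := by
    rw [Fin.update_snoc_last]
  rw [h1, f.map_update_smul, ← h2]

lemma alt_snoc_add (f : M [⋀^Fin (k+1)]→ₗ[R] N) (c : Fin k → M) (y z : M) :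
    f (Fin.snoc c y) + f (Fin.snoc c z) = f (Fin.snoc c (y + z)) := by
  have h := f.map_update_add (Fin.snoc c y) (Fin.last k) y z
  rw [Fin.update_snoc_last, Fin.update_snoc_last, Fin.update_snoc_last] at h
  exact h.symm

lemma coe_basis_span {P : Type*} [AddCommGroup P] [Module R P] {L : Submodule R P} {n : ℕ}
    (b : Module.Basis (Fin n) R L) :
    Submodule.span R (Set.range (fun i => ((b i : P)))) = L := by
  have : (Set.range fun i => ((b i : P))) = L.subtype '' (Set.range b) := by
    rw [← Set.range_comp]; rfl
  rw [this, ← Submodule.map_span, b.span_eq, Submodule.map_top, Submodule.range_subtype]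

end Alt

section Lattice

variable {k : ℕ}

noncomputable def iQ (k : ℕ) : (Fin k → ℤ) →ₗ[ℤ] (Fin k → ℚ) :=
  LinearMap.pi fun i => (Algebra.linearMap ℤ ℚ).comp (LinearMap.proj i)

lemma iQ_apply (x : Fin k → ℤ) (i : Fin k) : iQ k x i = (x i : ℚ) := rfl

lemma iQ_injective : Function.Injective (iQ k) := by
  intro x y h
  funext i
  have := congrFun h i
  rw [iQ_apply, iQ_apply] at this
  exact_mod_cast this

noncomputable def lat (S : Submodule ℚ (Fin k → ℚ)) : Submodule ℤ (Fin k → ℤ) :=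
  (S.restrictScalars ℤ).comap (iQ k)

lemma mem_lat {S : Submodule ℚ (Fin k → ℚ)} {x : Fin k → ℤ} : x ∈ lat S ↔ iQ k x ∈ S :=
  Iff.rfl

lemma denom_clear (x : Fin k → ℚ) :
    ∃ (N : ℤ) (z : Fin k → ℤ), N ≠ 0 ∧ iQ k z = (N : ℚ) • x := by
  classical
  set N : ℤ := ∏ i, ((x i).den : ℤ) with hN
  have hNne : N ≠ 0 := by
    rw [hN]
    apply Finset.prod_ne_zero_iff.mpr
    intro i _
    exact_mod_cast (x i).den_nz
  have hz : ∀ i, ∃ z : ℤ, (z : ℚ) = (N : ℚ) * x i := by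
    intro i
    have hdvd : ((x i).den : ℤ) ∣ N := Finset.dvd_prod_of_mem _ (Finset.mem_univ i)
    obtain ⟨m, hm⟩ := hdvd
    refine ⟨m * (x i).num, ?_⟩
    have h0 : ((x i).den : ℚ) ≠ 0 := by exact_mod_cast (x i).den_nz
    have hnd := Rat.num_div_den (x i)
    rw [div_eq_iff h0] at hnd
    push_cast [hm]
    linear_combination (m : ℚ) * hnd
  choose z hzz using hz
  refine ⟨N, z, hNne, ?_⟩
  funext i
  rw [iQ_apply]
  simpa using hzz i

instance lat_finite (S : Submodule ℚ (Fin k → ℚ)) : Module.Finite ℤ (lat S) :=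
  Module.Finite.iff_fg.mpr (IsNoetherian.noetherian _)

lemma lat_rank (S : Submodule ℚ (Fin k → ℚ)) :
    Module.finrank ℤ (lat S) = Module.finrank ℚ S := by
  classical
  set L := lat S with hL
  set n := Module.finrank ℤ L with hn
  set b := Module.finBasis ℤ L with hb
  set v : Fin n → (Fin k → ℚ) := fun i => iQ k ((b i : Fin k → ℤ)) with hv
  have hind : LinearIndependent ℚ v := by
    rw [← LinearIndependent.iff_fractionRing (R := ℤ) (K := ℚ)]
    have hve : v = (iQ k ∘ₗ L.subtype) ∘ b := rfl
    rw [hve]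
    apply b.linearIndependent.map' _
    rw [LinearMap.ker_eq_bot]
    exact iQ_injective.comp L.injective_subtype
  have hspan : Submodule.span ℚ (Set.range v) = S := by
    apply le_antisymm
    · rw [Submodule.span_le]
      rintro _ ⟨i, rfl⟩
      exact (b i).2
    · intro x hx
      obtain ⟨N, zz, hNne, hz⟩ := denom_clear x
      have hzL : zz ∈ L := by
        rw [hL, mem_lat, hz]
        exact S.smul_mem _ hx
      have hzspan : iQ k zz ∈ Submodule.span ℚ (Set.range v) := by
        have h1 : zz ∈ Submodule.span ℤ (Set.range (fun i => ((b i : Fin k → ℤ)))) := by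
          rw [coe_basis_span b]
          exact hzL
        have h2 : iQ k zz ∈ Submodule.map (iQ k)
            (Submodule.span ℤ (Set.range (fun i => ((b i : Fin k → ℤ))))) :=
          Submodule.mem_map_of_mem h1
        rw [Submodule.map_span] at h2
        have h3 : Submodule.span ℤ (iQ k '' (Set.range (fun i => ((b i : Fin k → ℤ)))))
            ≤ (Submodule.span ℚ (Set.range v)).restrictScalars ℤ := by
          rw [Submodule.span_le]
          rintro _ ⟨_, ⟨i, rfl⟩, rfl⟩
          exact Submodule.subset_span ⟨i, rfl⟩
        exact h3 h2
      have hxx : x = (N : ℚ)⁻¹ • ((N : ℚ) • x) := by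
        rw [smul_smul, inv_mul_cancel₀ (by exact_mod_cast hNne), one_smul]
      rw [hxx, ← hz]
      exact Submodule.smul_mem _ _ hzspan
  rw [← hspan, finrank_span_eq_card hind, Fintype.card_fin]

end Lattice

section Spaces
variable {k : ℕ}

lemma shrink_space (S : Submodule ℚ (Fin k → ℚ)) (m : ℕ) (h : m ≤ Module.finrank ℚ S) :
    ∃ T, T ≤ S ∧ Module.finrank ℚ T = m := by
  classical
  set b := Module.finBasis ℚ S with hb
  set v : Fin m → (Fin k → ℚ) := fun i => (b (Fin.castLE h i) : Fin k → ℚ) with hv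
  have hind : LinearIndependent ℚ v := by
    have hv2 : v = (S.subtype ∘ b) ∘ (Fin.castLE h) := rfl
    rw [hv2]
    apply LinearIndependent.comp _ _ (Fin.castLE_injective h)
    apply b.linearIndependent.map' _
    rw [LinearMap.ker_eq_bot]
    exact S.injective_subtype
  refine ⟨Submodule.span ℚ (Set.range v), ?_, ?_⟩
  · rw [Submodule.span_le]
    rintro _ ⟨i, rfl⟩
    exact (b _).2
  · rw [finrank_span_eq_card hind, Fintype.card_fin]

lemma grow_space (S : Submodule ℚ (Fin k → ℚ)) (m : ℕ) (h1 : Module.finrank ℚ S ≤ m)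
    (h2 : m ≤ k) : ∃ T, S ≤ T ∧ Module.finrank ℚ T = m := by
  have hV : Module.finrank ℚ (Fin k → ℚ) = k := by
    rw [Module.finrank_fintype_fun_eq_card, Fintype.card_fin]
  obtain ⟨S', hS'⟩ := Submodule.exists_isCompl S
  have hsum : Module.finrank ℚ S + Module.finrank ℚ S' = k := by
    have h3 := Submodule.finrank_add_eq_of_isCompl hS'
    omega
  obtain ⟨T', hT'S', hT'⟩ := shrink_space S' (m - Module.finrank ℚ S) (by omega)
  refine ⟨S ⊔ T', le_sup_left, ?_⟩
  have hinf : S ⊓ T' = ⊥ := by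
    have : S ⊓ T' ≤ S ⊓ S' := inf_le_inf_left S hT'S'
    rw [hS'.inf_eq_bot] at this
    exact le_bot_iff.mp this
  have := Submodule.finrank_sup_add_finrank_inf_eq S T'
  rw [hinf, finrank_bot] at this
  omega

lemma ext_span (P A : Submodule ℚ (Fin k → ℚ)) (hPA : P ≤ A) {m : ℕ}
    (hA : Module.finrank ℚ A = m + 1) (hP : Module.finrank ℚ P = m)
    (c : Fin m → (Fin k → ℤ)) (hc : Submodule.span ℤ (Set.range c) = lat P) :
    ∃ y : Fin k → ℤ,
      lat A ≤ Submodule.span ℤ (Set.range (Fin.snoc c y : Fin (m+1) → (Fin k → ℤ))) := by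
  classical
  set LA := lat A with hLA
  set LP := lat P with hLP
  have hle : LP ≤ LA := fun x hx => hPA hx
  set LPin : Submodule ℤ LA := LP.comap LA.subtype with hLPin
  have hsat : ∀ (n : ℤ) (a : LA), n ≠ 0 → n • a ∈ LPin → a ∈ LPin := by
    intro n a hn hna
    have h1 : iQ k ((n • a : LA) : Fin k → ℤ) ∈ P := hna
    have h2 : ((n • a : LA) : Fin k → ℤ) = n • (a : Fin k → ℤ) := rfl
    rw [h2, map_zsmul] at h1
    have h3 : iQ k (a : Fin k → ℤ) ∈ P := by
      have h4 : iQ k (a : Fin k → ℤ) = ((n : ℚ))⁻¹ • ((n:ℚ) • iQ k (a : Fin k → ℤ)) := by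
        rw [smul_smul, inv_mul_cancel₀ (by exact_mod_cast hn), one_smul]
      rw [h4, Int.cast_smul_eq_zsmul]
      exact P.smul_mem _ h1
    exact h3
  haveI : NoZeroSMulDivisors ℤ (LA ⧸ LPin) := by
    refine ⟨fun {n x} hnx => ?_⟩
    by_cases hn : n = 0
    · left; exact hn
    · right
      obtain ⟨a, rfl⟩ := Submodule.Quotient.mk_surjective LPin x
      rw [← Submodule.Quotient.mk_smul, Submodule.Quotient.mk_eq_zero] at hnx
      rw [Submodule.Quotient.mk_eq_zero]
      exact hsat n a hn hnx
  obtain ⟨s, hs⟩ := Module.projective_lifting_property LPin.mkQ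
    (LinearMap.id : (LA ⧸ LPin) →ₗ[ℤ] (LA ⧸ LPin)) LPin.mkQ_surjective
  let φ : (LPin × (LA ⧸ LPin)) →ₗ[ℤ] LA := LinearMap.coprod LPin.subtype s
  have hmkqs : ∀ q : LA ⧸ LPin, LPin.mkQ (s q) = q := fun q => congrArg (fun g => g q) hs
  have hφbij : Function.Bijective φ := by
    constructor
    · intro x y hxy
      have h1 : LPin.subtype x.1 + s x.2 = LPin.subtype y.1 + s y.2 := hxy
      have h2 : x.2 = y.2 := by
        have h5 := congrArg LPin.mkQ h1
        rw [map_add, map_add] at h5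
        have hx0 : LPin.mkQ (LPin.subtype x.1) = 0 := (Submodule.Quotient.mk_eq_zero _).mpr x.1.2
        have hy0 : LPin.mkQ (LPin.subtype y.1) = 0 := (Submodule.Quotient.mk_eq_zero _).mpr y.1.2
        rwa [hx0, hy0, hmkqs, hmkqs, zero_add, zero_add] at h5
      have h3 : (x.1 : LA) = (y.1 : LA) := by
        rw [h2] at h1
        have := add_right_cancel h1
        exact this
      exact Prod.ext (Subtype.ext h3) h2
    · intro a
      refine ⟨⟨⟨a - s (LPin.mkQ a), ?_⟩, LPin.mkQ a⟩, ?_⟩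
      · have : LPin.mkQ (a - s (LPin.mkQ a)) = 0 := by
          rw [map_sub, hmkqs, sub_self]
        rwa [← Submodule.Quotient.mk_eq_zero]
      · show (a - s (LPin.mkQ a)) + s (LPin.mkQ a) = a
        abel
  haveI : Module.Finite ℤ LPin :=
    Module.Finite.equiv (Submodule.comapSubtypeEquivOfLe hle).symm
  let E : (LPin × (LA ⧸ LPin)) ≃ₗ[ℤ] LA := LinearEquiv.ofBijective φ hφbij
  have hrkLA : Module.finrank ℤ LA = m + 1 := by rw [hLA, lat_rank, hA]
  have hrkLPin : Module.finrank ℤ LPin = m := by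
    rw [(Submodule.comapSubtypeEquivOfLe hle).finrank_eq, hLP, lat_rank, hP]
  have hrkQ : Module.finrank ℤ (LA ⧸ LPin) = 1 := by
    have h1 := E.finrank_eq
    rw [Module.finrank_prod, hrkLPin, hrkLA] at h1
    omega
  let bQ : Module.Basis (Fin 1) ℤ (LA ⧸ LPin) := Module.finBasisOfFinrankEq ℤ _ hrkQ
  refine ⟨(s (bQ 0) : Fin k → ℤ), ?_⟩
  intro a ha
  set aL : LA := ⟨a, ha⟩ with haL
  set z : ℤ := bQ.repr (LPin.mkQ aL) 0 with hzdef
  have hzq : LPin.mkQ aL = z • bQ 0 := by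
    have h1 := (bQ.sum_repr (LPin.mkQ aL)).symm
    rwa [Fin.sum_univ_one] at h1
  have hmem : aL - z • s (bQ 0) ∈ LPin := by
    rw [← Submodule.Quotient.mk_eq_zero]
    have : LPin.mkQ (aL - z • s (bQ 0)) = 0 := by
      rw [map_sub, map_zsmul, hmkqs, hzq, sub_self]
    exact this
  have hW : (a - z • ((s (bQ 0) : Fin k → ℤ))) ∈ Submodule.span ℤ (Set.range c) := by
    rw [hc]
    exact hmem
  have hdec : a = (a - z • ((s (bQ 0) : Fin k → ℤ))) + z • ((s (bQ 0) : Fin k → ℤ)) := by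
    abel
  rw [hdec]
  apply Submodule.add_mem
  · apply Submodule.span_mono _ hW
    rintro _ ⟨i, rfl⟩
    exact ⟨Fin.castSucc i, by simp⟩
  · apply zsmul_mem
    exact Submodule.subset_span ⟨Fin.last m, by simp⟩

end Spaces

lemma sum_pure (e : ℕ) (u w : Fin (e+1) → (Fin (e+2) → ℤ)) :
    ∃ v : Fin (e+1) → (Fin (e+2) → ℤ),
      ExteriorAlgebra.ιMulti ℤ (e+1) u + ExteriorAlgebra.ιMulti ℤ (e+1) w
        = ExteriorAlgebra.ιMulti ℤ (e+1) v := by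
  classical
  have hV : Module.finrank ℚ (Fin (e+2) → ℚ) = e+2 := by
    rw [Module.finrank_fintype_fun_eq_card, Fintype.card_fin]
  set Su := Submodule.span ℚ (Set.range (fun i => iQ (e+2) (u i))) with hSu
  set Sw := Submodule.span ℚ (Set.range (fun i => iQ (e+2) (w i))) with hSw
  have hSule : Module.finrank ℚ Su ≤ e+1 := by
    have := finrank_range_le_card (R := ℚ) (fun i => iQ (e+2) (u i))
    rwa [Set.finrank, Fintype.card_fin] at this
  have hSwle : Module.finrank ℚ Sw ≤ e+1 := by
    have := finrank_range_le_card (R := ℚ) (fun i => iQ (e+2) (w i))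
    rwa [Set.finrank, Fintype.card_fin] at this
  obtain ⟨A, hSuA, hA⟩ := grow_space Su (e+1) hSule (by omega)
  obtain ⟨B, hSwB, hB⟩ := grow_space Sw (e+1) hSwle (by omega)
  have hfAB : e ≤ Module.finrank ℚ (A ⊓ B : Submodule ℚ (Fin (e+2) → ℚ)) := by
    have h1 := Submodule.finrank_sup_add_finrank_inf_eq A B
    have h2 : Module.finrank ℚ (A ⊔ B : Submodule ℚ (Fin (e+2) → ℚ)) ≤ e+2 :=
      (Submodule.finrank_le _).trans_eq hV
    omega
  obtain ⟨P, hPAB, hP⟩ := shrink_space (A ⊓ B) e hfAB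
  have hrkP : Module.finrank ℤ (lat P) = e := (lat_rank P).trans hP
  let bP : Module.Basis (Fin e) ℤ (lat P) := Module.finBasisOfFinrankEq ℤ _ hrkP
  set c : Fin e → (Fin (e+2) → ℤ) := fun i => (bP i : Fin (e+2) → ℤ) with hcdef
  have hc : Submodule.span ℤ (Set.range c) = lat P := coe_basis_span bP
  obtain ⟨y, hy⟩ := ext_span P A (hPAB.trans inf_le_left) hA hP c hc
  obtain ⟨z, hz⟩ := ext_span P B (hPAB.trans inf_le_right) hB hP c hc
  have hu : ∀ i, u i ∈ Submodule.span ℤ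
      (Set.range (Fin.snoc c y : Fin (e+1) → (Fin (e+2) → ℤ))) := by
    intro i
    apply hy
    exact hSuA (Submodule.subset_span ⟨i, rfl⟩)
  have hw : ∀ i, w i ∈ Submodule.span ℤ
      (Set.range (Fin.snoc c z : Fin (e+1) → (Fin (e+2) → ℤ))) := by
    intro i
    apply hz
    exact hSwB (Submodule.subset_span ⟨i, rfl⟩)
  obtain ⟨m1, hm1⟩ := alt_exists_smul (ExteriorAlgebra.ιMulti ℤ (e+1)) (Fin.snoc c y) u hu
  obtain ⟨m2, hm2⟩ := alt_exists_smul (ExteriorAlgebra.ιMulti ℤ (e+1)) (Fin.snoc c z) w hw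
  refine ⟨Fin.snoc c (m1 • y + m2 • z), ?_⟩
  rw [hm1, hm2, alt_snoc_smul, alt_snoc_smul, alt_snoc_add]

lemma part2 (p : ℕ) [Fact p.Prime] (d : ℕ) (u w : Fin d → (Fin (d + 1) → ℤ))
    (c c' : QpZp p) :
    ∃ (v : Fin d → (Fin (d + 1) → ℤ)) (c'' : QpZp p),
      (ExteriorAlgebra.ιMulti ℤ d u) ⊗ₜ[ℤ] c + (ExteriorAlgebra.ιMulti ℤ d w) ⊗ₜ[ℤ] c' =
        (ExteriorAlgebra.ιMulti ℤ d v) ⊗ₜ[ℤ] c'' := by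
  cases d with
  | zero =>
    refine ⟨u, c + c', ?_⟩
    have huw : w = u := Subsingleton.elim _ _
    rw [huw, ← TensorProduct.tmul_add]
  | succ e =>
    obtain ⟨c₀, a, b, hc, hc'⟩ := exists_common_gen p c c'
    have hu' := alt_smul_eq (ExteriorAlgebra.ιMulti ℤ (e+1)) u a
    have hw' := alt_smul_eq (ExteriorAlgebra.ιMulti ℤ (e+1)) w b
    obtain ⟨v, hv⟩ := sum_pure e (Function.update u 0 (a • u 0)) (Function.update w 0 (b • w 0))
    refine ⟨v, c₀, ?_⟩
    rw [hc, hc', ← TensorProduct.smul_tmul, ← TensorProduct.smul_tmul, hu', hw',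
      ← TensorProduct.add_tmul, hv]

/-- Let `W = ℤ^{d+1}` be free abelian of rank `d+1` and `p` a prime.
Every element of `(⋀^d W) ⊗ ℚ_p/ℤ_p` is a pure tensor `c ⊗ u₁∧…∧u_d` (any `a/pⁿ` being
an element `c` of `ℚ_p/ℤ_p`); more precisely, the sum of two pure tensors in
`⋀^d W ⊗ ℚ_p/ℤ_p` is again a pure tensor. -/
theorem stmt_12 (p : ℕ) [Fact p.Prime] (d : ℕ) :
    (∀ x ∈ LinearMap.range (LinearMap.rTensor (QpZp p)
        (⋀[ℤ]^d (Fin (d + 1) → ℤ)).subtype),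
      ∃ (v : Fin d → (Fin (d + 1) → ℤ)) (c : QpZp p),
        x = (ExteriorAlgebra.ιMulti ℤ d v) ⊗ₜ[ℤ] c) ∧
    (∀ (u w : Fin d → (Fin (d + 1) → ℤ)) (c c' : QpZp p),
      ∃ (v : Fin d → (Fin (d + 1) → ℤ)) (c'' : QpZp p),
        (ExteriorAlgebra.ιMulti ℤ d u) ⊗ₜ[ℤ] c + (ExteriorAlgebra.ιMulti ℤ d w) ⊗ₜ[ℤ] c' =
          (ExteriorAlgebra.ιMulti ℤ d v) ⊗ₜ[ℤ] c'') := by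
  constructor
  · intro x hx
    obtain ⟨t, rfl⟩ := hx
    induction t using TensorProduct.induction_on with
    | zero =>
      refine ⟨fun _ _ => 0, 0, ?_⟩
      rw [map_zero, TensorProduct.tmul_zero]
    | tmul m cc =>
      rw [LinearMap.rTensor_tmul]
      have hm : (m : ExteriorAlgebra ℤ (Fin (d+1) → ℤ)) ∈ Submodule.span ℤ
          (Set.range (ExteriorAlgebra.ιMulti ℤ d (M := Fin (d+1) → ℤ))) := by
        rw [ExteriorAlgebra.ιMulti_span_fixedDegree]
        exact m.2
      have claim : ∀ x ∈ Submodule.span ℤ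
          (Set.range (ExteriorAlgebra.ιMulti ℤ d (M := Fin (d+1) → ℤ))),
          ∀ c : QpZp p, ∃ (v : Fin d → (Fin (d + 1) → ℤ)) (c' : QpZp p),
            x ⊗ₜ[ℤ] c = (ExteriorAlgebra.ιMulti ℤ d v) ⊗ₜ[ℤ] c' := by
        intro x hx
        induction hx using Submodule.span_induction with
        | mem x h =>
          obtain ⟨v, rfl⟩ := h
          exact fun c => ⟨v, c, rfl⟩
        | zero =>
          intro c
          exact ⟨fun _ _ => 0, 0, by rw [TensorProduct.zero_tmul, TensorProduct.tmul_zero]⟩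
        | add x y hx hy ihx ihy =>
          intro c
          obtain ⟨v1, c1, h1⟩ := ihx c
          obtain ⟨v2, c2, h2⟩ := ihy c
          obtain ⟨v, c'', h⟩ := part2 p d v1 v2 c1 c2
          exact ⟨v, c'', by rw [TensorProduct.add_tmul, h1, h2, h]⟩
        | smul z x hx ih =>
          intro c
          obtain ⟨v, c', h⟩ := ih (z • c)
          exact ⟨v, c', by rw [TensorProduct.smul_tmul, h]⟩
      exact claim m.1 hm cc
    | add x y ihx ihy =>
      rw [map_add]
      obtain ⟨v1, c1, h1⟩ := ihx
      obtain ⟨v2, c2, h2⟩ := ihy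
      obtain ⟨v, c'', h⟩ := part2 p d v1 v2 c1 c2
      exact ⟨v, c'', by rw [h1, h2, h]⟩
  · exact part2 p d
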